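/- Let r > 0 and let u ∈ C_b([−r,∞),X) be a bounded continuous function whose restriction to [0,∞) belongs to PSAP_{ω,r}(X). Then the history function s ↦ u_s from [0,∞) into C = C([−r,0],X), defined by u_s(θ) = u(s+θ) for θ ∈ [−r,0], belongs to PSAP_{ω,r}(C); that is, lim_{T→∞} (1/T)∫_r^T sup_{τ∈[s−r,s]} ‖u_{τ+ω} − u_τ‖_C ds = 0. -/

import Mathlib

open MeasureTheory Filter Set

/-- `u ∈ PSAP_{ω,r}(X)`: pseudo S-asymptotically ω-periodic of class r. -/
def PSAPclass {X : Type*} [NormedAddCommGroup X] (ω r : ℝ) (u : ℝ → X) : Prop :=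
  Tendsto (fun T : ℝ => (1 / T) * ∫ s in r..T, ⨆ τ ∈ Set.Icc (s - r) s, ‖u (τ + ω) - u τ‖)
    atTop (nhds 0)

/-- helper: element of a set-indexed real sup is ≤ the sup, given a uniform bound. -/
theorem le_biSup_real {g : ℝ → ℝ} {S : Set ℝ} {M : ℝ}
    (hM : ∀ τ ∈ S, g τ ≤ M) (hM0 : 0 ≤ M) {a : ℝ} (ha : a ∈ S) :
    g a ≤ ⨆ τ ∈ S, g τ := by
  have bdd : BddAbove (range fun τ => ⨆ _ : τ ∈ S, g τ) := by
    refine ⟨M, ?_⟩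
    rintro _ ⟨τ, rfl⟩
    exact Real.iSup_le (fun h => hM τ h) hM0
  calc g a = ⨆ _ : a ∈ S, g a := by rw [ciSup_pos ha]
    _ ≤ _ := le_ciSup bdd a

/-- Lemma 2.3: if `u ∈ C_b([−r,∞),X)` with `u|_{[0,∞)} ∈ PSAP_{ω,r}(X)`,
then the history `s ↦ u_s ∈ C([−r,0],X)` is in `PSAP_{ω,r}(C)`, i.e.
`(1/T)∫_r^T sup_{τ∈[s−r,s]} ‖u_{τ+ω} − u_τ‖_C ds → 0`, where
`‖u_{τ+ω} − u_τ‖_C = sup_{θ∈[−r,0]} ‖u(τ+ω+θ) − u(τ+θ)‖`. -/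
theorem history_psapClass {X : Type*} [NormedAddCommGroup X]
    (r ω : ℝ) (hr : 0 < r) (hω : 0 < ω) (u : ℝ → X)
    (hcont : ContinuousOn u (Set.Ici (-r))) (hbdd : ∃ B, ∀ t ≥ -r, ‖u t‖ ≤ B)
    (h : PSAPclass ω r u) :
    Tendsto (fun T : ℝ => (1 / T) * ∫ s in r..T,
        ⨆ τ ∈ Set.Icc (s - r) s, ⨆ θ ∈ Set.Icc (-r) (0:ℝ), ‖u (τ + ω + θ) - u (τ + θ)‖)
      atTop (nhds 0) := by
  obtain ⟨B, hB⟩ := hbdd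
  have hB0 : 0 ≤ B := le_trans (norm_nonneg _) (hB (-r) le_rfl)
  -- extend u continuously
  set v : ℝ → X := fun t => u (max t (-r)) with hv
  have hvcont : Continuous v :=
    hcont.comp_continuous (continuous_id.max continuous_const) (fun t => Set.mem_Ici.mpr (le_max_right _ _))
  have hvu : ∀ t, -r ≤ t → v t = u t := by
    intro t ht; simp only [hv]; rw [max_eq_left ht]
  have hvB : ∀ t, ‖v t‖ ≤ B := fun t => hB _ (le_max_right _ _)
  set f : ℝ → ℝ := fun τ => ‖v (τ + ω) - v τ‖ with hf
  have hfcont : Continuous f := by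
    apply Continuous.norm; exact (hvcont.comp (continuous_id.add continuous_const)).sub hvcont
  have hf0 : ∀ τ, 0 ≤ f τ := fun τ => norm_nonneg _
  have hfB : ∀ τ, f τ ≤ 2 * B := by
    intro τ
    calc f τ ≤ ‖v (τ + ω)‖ + ‖v τ‖ := norm_sub_le _ _
      _ ≤ 2 * B := by linarith [hvB (τ + ω), hvB τ]
  -- sliding window sup via continuous maps
  have hicc : (-r : ℝ) ≤ 0 := by linarith
  have key : Continuous fun p : ℝ × Icc (-r) (0:ℝ) => f (p.1 + (p.2 : ℝ)) :=
    hfcont.comp (continuous_fst.add (continuous_subtype_val.comp continuous_snd))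
  set Φ : C(ℝ, C(Icc (-r) (0:ℝ), ℝ)) := ContinuousMap.curry ⟨_, key⟩ with hΦ
  set G : ℝ → ℝ := fun s => ‖Φ s‖ with hG
  have hGcont : Continuous G := continuous_norm.comp Φ.continuous
  have hGs : ∀ s, G s = ⨆ θ : Icc (-r) (0:ℝ), f (s + θ) := by
    intro s
    show ‖Φ s‖ = _
    rw [ContinuousMap.norm_eq_iSup_norm]
    refine iSup_congr fun θ => ?_
    show ‖f (s + (θ : ℝ))‖ = f (s + (θ : ℝ))
    exact Real.norm_of_nonneg (hf0 _)
  have hG0 : ∀ s, 0 ≤ G s := fun s => norm_nonneg _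
  have bddS : ∀ s, BddAbove (range fun θ : Icc (-r) (0:ℝ) => f (s + θ)) := by
    intro s; exact ⟨2 * B, by rintro _ ⟨θ, rfl⟩; exact hfB _⟩
  have hfG : ∀ s θ, θ ∈ Icc (-r) (0:ℝ) → f (s + θ) ≤ G s := by
    intro s θ hθ; rw [hGs]; exact le_ciSup (bddS s) ⟨θ, hθ⟩
  have hfG' : ∀ s τ, τ ∈ Icc (s - r) s → f τ ≤ G s := by
    intro s τ hτ
    have : f τ = f (s + (τ - s)) := by congr 1; ring_nf
    rw [this]
    exact hfG s (τ - s) ⟨by linarith [hτ.1], by linarith [hτ.2]⟩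
  -- the PSAP integrand equals G for s ≥ r
  have hhint : ∀ s, r ≤ s → (⨆ τ ∈ Icc (s - r) s, ‖u (τ + ω) - u τ‖) = G s := by
    intro s hs
    have hmem : ∀ τ ∈ Icc (s - r) s, -r ≤ τ := fun τ hτ => by
      have := hτ.1; linarith
    have huv : ∀ τ ∈ Icc (s - r) s, ‖u (τ + ω) - u τ‖ = f τ := by
      intro τ hτ
      show _ = ‖v (τ + ω) - v τ‖
      rw [hvu τ (hmem τ hτ), hvu (τ + ω) (by linarith [hmem τ hτ])]
    apply le_antisymm
    · exact Real.iSup_le (fun τ => Real.iSup_le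
        (fun hτ => le_of_eq_of_le (huv τ hτ) (hfG' s τ hτ)) (hG0 s)) (hG0 s)
    · rw [hGs]
      refine Real.iSup_le (fun θ => ?_) ?_
      · have hm : (s + (θ : ℝ)) ∈ Icc (s - r) s := ⟨by linarith [θ.2.1], by linarith [θ.2.2]⟩
        have h2 : ‖u (s + (θ:ℝ) + ω) - u (s + (θ:ℝ))‖ ≤
            ⨆ τ ∈ Icc (s - r) s, ‖u (τ + ω) - u τ‖ :=
          le_biSup_real (g := fun τ => ‖u (τ + ω) - u τ‖) (S := Icc (s - r) s)
            (M := 2 * B) (fun τ hτ => le_of_eq_of_le (huv τ hτ) (hfB τ)) (by linarith) hm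
        calc f (s + (θ:ℝ)) = ‖u (s + (θ:ℝ) + ω) - u (s + (θ:ℝ))‖ := (huv _ hm).symm
          _ ≤ _ := h2
      · exact Real.iSup_nonneg fun τ => Real.iSup_nonneg fun _ => norm_nonneg _
  -- goal integrand equals max (G (s-r)) (G s) for s ≥ r
  set Hfun : ℝ → ℝ := fun s =>
    ⨆ τ ∈ Icc (s - r) s, ⨆ θ ∈ Icc (-r) (0:ℝ), ‖u (τ + ω + θ) - u (τ + θ)‖ with hHfun
  have hterm : ∀ s, r ≤ s → ∀ τ ∈ Icc (s - r) s, ∀ θ ∈ Icc (-r) (0:ℝ),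
      ‖u (τ + ω + θ) - u (τ + θ)‖ = f (τ + θ) := by
    intro s hs τ hτ θ hθ
    have h1 : -r ≤ τ + θ := by
      have := hτ.1; have := hθ.1; nlinarith [hr.le]
    have h2 : -r ≤ τ + θ + ω := by linarith
    show _ = ‖v (τ + θ + ω) - v (τ + θ)‖
    rw [hvu _ h1, hvu _ h2]
    congr 2
    ring_nf
  have hHmax : ∀ s, r ≤ s → Hfun s = max (G (s - r)) (G s) := by
    intro s hs
    have hmax0 : 0 ≤ max (G (s - r)) (G s) := le_max_of_le_left (hG0 _)
    apply le_antisymm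
    · refine Real.iSup_le (fun τ => Real.iSup_le (fun hτ => Real.iSup_le (fun θ =>
        Real.iSup_le (fun hθ => ?_) hmax0) hmax0) hmax0) hmax0
      rw [hterm s hs τ hτ θ hθ]
      rcases le_or_gt (τ + θ) (s - r) with hc | hc
      · refine le_max_of_le_left (hfG' (s - r) (τ + θ) ⟨?_, hc⟩)
        have := hτ.1; have := hθ.1; linarith
      · refine le_max_of_le_right (hfG' s (τ + θ) ⟨hc.le, ?_⟩)
        have := hτ.2; have := hθ.2; linarith
    · have hHnn : 0 ≤ Hfun s :=
        Real.iSup_nonneg fun τ => Real.iSup_nonneg fun _ =>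
          Real.iSup_nonneg fun θ => Real.iSup_nonneg fun _ => norm_nonneg _
      have hinner_bdd : ∀ τ ∈ Icc (s - r) s,
          (⨆ θ ∈ Icc (-r) (0:ℝ), ‖u (τ + ω + θ) - u (τ + θ)‖) ≤ 2 * B := by
        intro τ hτ
        exact Real.iSup_le (fun θ => Real.iSup_le
          (fun hθ => le_of_eq_of_le (hterm s hs τ hτ θ hθ) (hfB _)) (by linarith)) (by linarith)
      have hinner_le : ∀ τ ∈ Icc (s - r) s, ∀ θ ∈ Icc (-r) (0:ℝ),
          ‖u (τ + ω + θ) - u (τ + θ)‖ ≤ Hfun s := by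
        intro τ hτ θ hθ
        have h1 : ‖u (τ + ω + θ) - u (τ + θ)‖ ≤
            ⨆ θ ∈ Icc (-r) (0:ℝ), ‖u (τ + ω + θ) - u (τ + θ)‖ :=
          le_biSup_real (g := fun θ => ‖u (τ + ω + θ) - u (τ + θ)‖)
            (M := 2 * B) (fun θ' hθ' => le_of_eq_of_le (hterm s hs τ hτ θ' hθ') (hfB _))
            (by linarith) hθ
        refine h1.trans ?_
        have h2 : (⨆ θ ∈ Icc (-r) (0:ℝ), ‖u (τ + ω + θ) - u (τ + θ)‖) ≤ Hfun s :=
          le_biSup_real (g := fun τ => ⨆ θ ∈ Icc (-r) (0:ℝ), ‖u (τ + ω + θ) - u (τ + θ)‖)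
            (M := 2 * B) hinner_bdd (by linarith) hτ
        exact h2
      refine max_le ?_ ?_
      · rw [hGs]
        refine Real.iSup_le (fun θ => ?_) hHnn
        have hτm : (s + (θ : ℝ)) ∈ Icc (s - r) s := ⟨by linarith [θ.2.1], by linarith [θ.2.2]⟩
        have hθm : (-r) ∈ Icc (-r) (0:ℝ) := ⟨le_rfl, by linarith⟩
        have hle := hinner_le _ hτm _ hθm
        have heq : f (s - r + (θ : ℝ)) = ‖u (s + (θ:ℝ) + ω + -r) - u (s + (θ:ℝ) + -r)‖ := by
          rw [hterm s hs _ hτm _ hθm]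
          congr 1
          ring_nf
        exact le_of_eq_of_le heq hle
      · rw [hGs]
        refine Real.iSup_le (fun θ => ?_) hHnn
        have hτm : s ∈ Icc (s - r) s := ⟨by linarith, le_rfl⟩
        have hθm : (θ : ℝ) ∈ Icc (-r) (0:ℝ) := θ.2
        have hle := hinner_le _ hτm _ hθm
        have heq : f (s + (θ : ℝ)) = ‖u (s + ω + (θ:ℝ)) - u (s + (θ:ℝ))‖ :=
          (hterm s hs _ hτm _ hθm).symm
        exact le_of_eq_of_le heq hle
  -- integrals
  set I : ℝ → ℝ := fun T => ∫ s in r..T, G s with hI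
  have hGint : ∀ a b : ℝ, IntervalIntegrable G volume a b := fun a b =>
    hGcont.intervalIntegrable a b
  have hGshift : Continuous fun s => G (s - r) := hGcont.comp (continuous_id.sub continuous_const)
  have hHt : Continuous fun s => max (G (s - r)) (G s) := hGshift.max hGcont
  have h' : Tendsto (fun T => (1 / T) * I T) atTop (nhds 0) := by
    refine h.congr' ?_
    filter_upwards [eventually_ge_atTop r] with T hT
    congr 1
    rw [hI]
    refine intervalIntegral.integral_congr fun s hs => ?_
    rw [uIcc_of_le hT] at hs
    exact hhint s hs.1
  set C : ℝ := ∫ s in (0:ℝ)..r, G s with hC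
  -- the tilde tendsto
  have hmain : Tendsto (fun T => (1 / T) * ∫ s in r..T, max (G (s - r)) (G s)) atTop (nhds 0) := by
    have hupperT : Tendsto (fun T : ℝ => (1 / T) * C + 2 * ((1 / T) * I T)) atTop (nhds 0) := by
      have h1 : Tendsto (fun T : ℝ => (1 / T) * C) atTop (nhds 0) := by
        have := tendsto_inv_atTop_zero (𝕜 := ℝ)
        simpa [one_div] using this.mul_const C
      have h2 : Tendsto (fun T : ℝ => 2 * ((1 / T) * I T)) atTop (nhds 0) := by
        simpa using h'.const_mul 2
      simpa using h1.add h2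
    refine tendsto_of_tendsto_of_tendsto_of_le_of_le' tendsto_const_nhds hupperT ?_ ?_
    · filter_upwards [eventually_ge_atTop r] with T hT
      have hT0 : 0 < T := lt_of_lt_of_le hr hT
      refine mul_nonneg (by positivity) ?_
      exact intervalIntegral.integral_nonneg hT (fun x _ => le_max_of_le_left (hG0 _))
    · filter_upwards [eventually_ge_atTop (2 * r)] with T hT
      have hrT : r ≤ T := by linarith
      have hT0 : 0 < T := lt_of_lt_of_le hr hrT
      have step1 : (∫ s in r..T, max (G (s - r)) (G s)) ≤
          ∫ s in r..T, (G (s - r) + G s) := by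
        refine intervalIntegral.integral_mono_on hrT (hHt.intervalIntegrable r T)
          ((hGshift.add hGcont).intervalIntegrable r T) fun x _ =>
          max_le_add_of_nonneg (hG0 _) (hG0 _)
      have step2 : (∫ s in r..T, (G (s - r) + G s)) =
          (∫ s in r..T, G (s - r)) + I T :=
        intervalIntegral.integral_add (hGshift.intervalIntegrable r T) (hGint r T)
      have step3 : (∫ s in r..T, G (s - r)) = ∫ s in (0:ℝ)..(T - r), G s := by
        rw [intervalIntegral.integral_comp_sub_right, sub_self]
      have step4 : (∫ s in (0:ℝ)..(T - r), G s) ≤ ∫ s in (0:ℝ)..T, G s := by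
        have hadj := intervalIntegral.integral_add_adjacent_intervals
          (hGint 0 (T - r)) (hGint (T - r) T)
        have hnn : 0 ≤ ∫ s in (T - r)..T, G s :=
          intervalIntegral.integral_nonneg (by linarith) (fun x _ => hG0 _)
        linarith
      have step5 : (∫ s in (0:ℝ)..T, G s) = C + I T :=
        (intervalIntegral.integral_add_adjacent_intervals (hGint 0 r) (hGint r T)).symm
      have hbound : (∫ s in r..T, max (G (s - r)) (G s)) ≤ C + 2 * I T := by
        calc (∫ s in r..T, max (G (s - r)) (G s))
            ≤ (∫ s in r..T, G (s - r)) + I T := by rw [← step2]; exact step1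
          _ ≤ (C + I T) + I T := by
              rw [step3]
              have := step4.trans_eq step5
              linarith
          _ = C + 2 * I T := by ring
      calc (1 / T) * ∫ s in r..T, max (G (s - r)) (G s)
          ≤ (1 / T) * (C + 2 * I T) :=
            mul_le_mul_of_nonneg_left hbound (by positivity)
        _ = (1 / T) * C + 2 * ((1 / T) * I T) := by ring
  -- transfer back
  refine hmain.congr' ?_
  filter_upwards [eventually_ge_atTop r] with T hT
  congr 1
  refine intervalIntegral.integral_congr fun s hs => ?_
  rw [uIcc_of_le hT] at hs
  exact (hHmax s hs.1).symm
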